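/- Suppose for each k ≤ N the reference set S_k ⊂ U_n satisfies Σ_{S ∈ S_k} S Sᵀ = c_k I_n for constants c_k > 0, weights ω_{kj} = w_k are equal within level k and normalized, and samples are X_{kj} = x̄ + √(r_k + β) √P S_j. If β = (1 - Σ_k w_k r_k c_k)/(Σ_k w_k c_k), then the weighted sample covariance Σ_{k,j} ω_{kj} (X_{kj} - x̄)(X_{kj} - x̄)ᵀ equals P. -/

import Mathlib

open Matrix Finset

lemma vecMulVec_smul_mulVec {n : ℕ} (a : ℝ) (A : Matrix (Fin n) (Fin n) ℝ) (s : Fin n → ℝ) :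
    Matrix.vecMulVec (a • A.mulVec s) (a • A.mulVec s)
      = (a * a) • (A * Matrix.vecMulVec s s * A.transpose) := by
  ext i j
  simp only [Matrix.vecMulVec_apply, Matrix.smul_apply, Pi.smul_apply, Matrix.mul_apply,
    Matrix.mulVec, dotProduct, Matrix.transpose_apply, smul_eq_mul,
    Finset.sum_mul, Finset.mul_sum]
  apply Finset.sum_congr rfl; intro b _
  apply Finset.sum_congr rfl; intro c _
  ring

/-- Covariance matching of the geometric unscented samples: if each reference
set satisfies the second-moment identity `∑_{S ∈ S_k} S Sᵀ = c_k I`, weights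
are equal within a level and normalized, and the stretch parameter is
`β = (1 - ∑_k w_k r_k c_k)/(∑_k w_k c_k)`, then the weighted sample covariance
equals `P`. -/
theorem gus_covariance_matching {n N : ℕ} (xb : Fin n → ℝ)
    (P A : Matrix (Fin n) (Fin n) ℝ) (hP : P.PosDef)
    (hA : A * A.transpose = P)
    (S : Fin N → Finset (Fin n → ℝ))
    (hunit : ∀ k, ∀ s ∈ S k, dotProduct s s = 1)
    (c : Fin N → ℝ) (hc : ∀ k, 0 < c k)
    (hmom : ∀ k, ∑ s ∈ S k, Matrix.vecMulVec s s = c k • (1 : Matrix (Fin n) (Fin n) ℝ))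
    (r : Fin N → ℝ) (hr : ∀ k, 0 ≤ r k)
    (w : Fin N → ℝ) (hw : ∀ k, 0 < w k)
    (hnorm : ∑ k, ((S k).card : ℝ) * w k = 1)
    (β : ℝ) (hβ : β = (1 - ∑ k, w k * r k * c k) / (∑ k, w k * c k))
    (hrβ : ∀ k, 0 ≤ r k + β) :
    ∑ k, ∑ s ∈ S k,
        w k • Matrix.vecMulVec
          ((xb + Real.sqrt (r k + β) • A.mulVec s) - xb)
          ((xb + Real.sqrt (r k + β) • A.mulVec s) - xb) = P := by
  have hN : 0 < N := by
    rcases Nat.eq_zero_or_pos N with h | h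
    · subst h; simp at hnorm
    · exact h
  have hwc : 0 < ∑ k, w k * c k := by
    haveI : Nonempty (Fin N) := Fin.pos_iff_nonempty.mp hN
    exact Finset.sum_pos (fun k _ => mul_pos (hw k) (hc k)) Finset.univ_nonempty
  have key : ∀ k, ∑ s ∈ S k,
      w k • Matrix.vecMulVec
        ((xb + Real.sqrt (r k + β) • A.mulVec s) - xb)
        ((xb + Real.sqrt (r k + β) • A.mulVec s) - xb)
      = (w k * ((r k + β) * c k)) • P := by
    intro k
    have hstep : ∀ s : Fin n → ℝ,
        Matrix.vecMulVec ((xb + Real.sqrt (r k + β) • A.mulVec s) - xb)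
          ((xb + Real.sqrt (r k + β) • A.mulVec s) - xb)
        = (r k + β) • (A * Matrix.vecMulVec s s * A.transpose) := by
      intro s
      rw [add_sub_cancel_left, vecMulVec_smul_mulVec, Real.mul_self_sqrt (hrβ k)]
    simp only [hstep, ← Finset.smul_sum]
    have hfac : ∑ s ∈ S k, A * Matrix.vecMulVec s s * A.transpose
        = A * (∑ s ∈ S k, Matrix.vecMulVec s s) * A.transpose := by
      rw [← Finset.sum_mul, ← Finset.mul_sum]
    rw [hfac, hmom k, Matrix.mul_smul, Matrix.smul_mul, Matrix.mul_one, hA,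
      smul_smul, smul_smul, mul_assoc]
  simp only [key]
  rw [← Finset.sum_smul]
  have hscal : ∑ k, w k * ((r k + β) * c k) = 1 := by
    have h1 : ∑ k, w k * ((r k + β) * c k)
        = (∑ k, w k * r k * c k) + β * ∑ k, w k * c k := by
      rw [Finset.mul_sum, ← Finset.sum_add_distrib]
      apply Finset.sum_congr rfl; intro k _; ring
    rw [h1, hβ, div_mul_cancel₀ _ (ne_of_gt hwc)]
    ring
  rw [hscal, one_smul]
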